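/- If G is an N×N matrix with property S, then an LU decomposition G = LU exists with L unit lower triangular and U upper triangular, and no row permutations are required. -/

import Mathlib

open Matrix Finset

private lemma propS_aux : ∀ (N : ℕ) (G : Matrix (Fin N) (Fin N) ℝ),
    (∀ i j, i ≠ j → G i j ≤ 0) →
    (∀ i, ∑ j, G i j = 0) →
    (∀ j, ∑ i, G i j = 0) →
    ∃ L U : Matrix (Fin N) (Fin N) ℝ,
      (∀ i, L i i = 1) ∧ (∀ i j : Fin N, i < j → L i j = 0) ∧
      (∀ i j : Fin N, j < i → U i j = 0) ∧ G = L * U := by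
  intro N
  induction N with
  | zero =>
    intro G _ _ _
    exact ⟨1, 1, fun i => i.elim0, fun i => i.elim0, fun i => i.elim0,
      by ext i j; exact i.elim0⟩
  | succ N ih =>
    intro G hoff hrow hcol
    have hrow0 := hrow 0
    rw [Fin.sum_univ_succ] at hrow0
    have hoffr : ∀ j : Fin N, G 0 j.succ ≤ 0 := fun j =>
      hoff 0 j.succ (Ne.symm (Fin.succ_ne_zero j))
    have hoffc : ∀ i : Fin N, G i.succ 0 ≤ 0 := fun i =>
      hoff i.succ 0 (Fin.succ_ne_zero i)
    have hgnn : 0 ≤ G 0 0 := by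
      have : ∑ j : Fin N, G 0 j.succ ≤ 0 :=
        Finset.sum_nonpos (fun j _ => hoffr j)
      linarith
    have hcol0 := hcol 0
    rw [Fin.sum_univ_succ] at hcol0
    have hzc : G 0 0 = 0 → ∀ i : Fin N, G i.succ 0 = 0 := by
      intro hz i
      have h0 : ∑ i : Fin N, G i.succ 0 = 0 := by linarith
      exact (Finset.sum_eq_zero_iff_of_nonpos (fun i _ => hoffc i)).mp h0 i
        (Finset.mem_univ i)
    have hzr : G 0 0 = 0 → ∀ j : Fin N, G 0 j.succ = 0 := by
      intro hz j
      have h0 : ∑ j : Fin N, G 0 j.succ = 0 := by linarith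
      exact (Finset.sum_eq_zero_iff_of_nonpos (fun j _ => hoffr j)).mp h0 j
        (Finset.mem_univ j)
    set G' : Matrix (Fin N) (Fin N) ℝ :=
      fun i j => G i.succ j.succ - G i.succ 0 * G 0 j.succ / G 0 0 with hG'
    have hdivnn : ∀ i j : Fin N, 0 ≤ G i.succ 0 * G 0 j.succ / G 0 0 :=
      fun i j => div_nonneg (by nlinarith [hoffc i, hoffr j]) hgnn
    have hoff' : ∀ i j : Fin N, i ≠ j → G' i j ≤ 0 := by
      intro i j hij
      have h1 : G i.succ j.succ ≤ 0 := hoff _ _ (fun h => hij (Fin.succ_injective N h))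
      have := hdivnn i j
      simp only [hG']
      linarith
    have key : ∀ i : Fin N, G i.succ 0 / G 0 0 * G 0 0 = G i.succ 0 := by
      intro i
      rcases eq_or_ne (G 0 0) 0 with hz | hz
      · rw [hz, hzc hz i]; ring
      · exact div_mul_cancel₀ _ hz
    have keyr : ∀ j : Fin N, G 0 j.succ / G 0 0 * G 0 0 = G 0 j.succ := by
      intro j
      rcases eq_or_ne (G 0 0) 0 with hz | hz
      · rw [hz, hzr hz j]; ring
      · exact div_mul_cancel₀ _ hz
    have hrow' : ∀ i : Fin N, ∑ j, G' i j = 0 := by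
      intro i
      have hri := hrow i.succ
      rw [Fin.sum_univ_succ] at hri
      have h1 : ∑ j : Fin N, G' i j
          = ∑ j : Fin N, G i.succ j.succ
            - G i.succ 0 / G 0 0 * ∑ j : Fin N, G 0 j.succ := by
        rw [Finset.mul_sum, ← Finset.sum_sub_distrib]
        exact Finset.sum_congr rfl fun j _ => by simp only [hG']; ring
      have h2 : ∑ j : Fin N, G 0 j.succ = -G 0 0 := by linarith
      have h3 : ∑ j : Fin N, G i.succ j.succ = -G i.succ 0 := by linarith
      rw [h1, h2, h3]
      nlinarith [key i]
    have hcol' : ∀ j : Fin N, ∑ i, G' i j = 0 := by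
      intro j
      have hcj := hcol j.succ
      rw [Fin.sum_univ_succ] at hcj
      have h1 : ∑ i : Fin N, G' i j
          = ∑ i : Fin N, G i.succ j.succ
            - (∑ i : Fin N, G i.succ 0) * (G 0 j.succ / G 0 0) := by
        rw [Finset.sum_mul, ← Finset.sum_sub_distrib]
        exact Finset.sum_congr rfl fun i _ => by simp only [hG']; ring
      have h2 : ∑ i : Fin N, G i.succ 0 = -G 0 0 := by linarith
      have h3 : ∑ i : Fin N, G i.succ j.succ = -G 0 j.succ := by linarith
      rw [h1, h2, h3]
      nlinarith [keyr j]
    obtain ⟨L', U', hL1, hLlow, hUup, hLU⟩ := ih G' hoff' hrow' hcol'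
    refine ⟨Fin.cons (Fin.cons 1 (fun _ => 0))
        (fun i' => Fin.cons (G i'.succ 0 / G 0 0) (fun j' => L' i' j')),
      Fin.cons (fun j => G 0 j)
        (fun i' => Fin.cons 0 (fun j' => U' i' j')), ?_, ?_, ?_, ?_⟩
    · intro i
      rcases Fin.eq_zero_or_eq_succ i with rfl | ⟨i', rfl⟩
      · simp
      · simp [hL1 i']
    · intro i j hij
      rcases Fin.eq_zero_or_eq_succ i with rfl | ⟨i', rfl⟩ <;>
        rcases Fin.eq_zero_or_eq_succ j with rfl | ⟨j', rfl⟩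
      · exact absurd hij (lt_irrefl _)
      · simp
      · exact absurd hij (by simp [Fin.not_lt, Fin.zero_le])
      · have : i' < j' := by rwa [Fin.succ_lt_succ_iff] at hij
        simp [hLlow i' j' this]
    · intro i j hij
      rcases Fin.eq_zero_or_eq_succ i with rfl | ⟨i', rfl⟩ <;>
        rcases Fin.eq_zero_or_eq_succ j with rfl | ⟨j', rfl⟩
      · exact absurd hij (lt_irrefl _)
      · exact absurd hij (by simp [Fin.not_lt, Fin.zero_le])
      · simp
      · have : j' < i' := by rwa [Fin.succ_lt_succ_iff] at hij
        simp [hUup i' j' this]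
    · ext i j
      erw [Matrix.mul_apply]
      rw [Fin.sum_univ_succ]
      rcases Fin.eq_zero_or_eq_succ i with rfl | ⟨i', rfl⟩
      · simp
      · rcases Fin.eq_zero_or_eq_succ j with rfl | ⟨j', rfl⟩
        · simp [key i']
        · have hLU' : G' i' j' = ∑ k : Fin N, L' i' k * U' k j' := by
            rw [hLU]; rfl
          simp only [Fin.cons_succ, Fin.cons_zero]
          rw [← hLU']
          simp only [hG']
          rw [div_mul_eq_mul_div]
          ring

theorem property_S_LU_exists (N : ℕ) (G : Matrix (Fin N) (Fin N) ℝ)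
    (hdiag : ∀ i, 0 ≤ G i i)
    (hoff : ∀ i j, i ≠ j → G i j ≤ 0)
    (hrow : ∀ i, ∑ j, G i j = 0)
    (hcol : ∀ j, ∑ i, G i j = 0) :
    ∃ L U : Matrix (Fin N) (Fin N) ℝ,
      (∀ i, L i i = 1) ∧ (∀ i j : Fin N, i < j → L i j = 0) ∧
      (∀ i j : Fin N, j < i → U i j = 0) ∧ G = L * U := by
  exact propS_aux N G hoff hrow hcol
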